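/- Let 𝔻 be a relative entropy. Define H by H(p) := log n − 𝔻(p‖u_n) for every n ∈ ℕ and p ∈ P(n), where u_n ∈ P(n) is the uniform vector. Then H is an entropy: it takes values in [0,∞), it satisfies H(p) ≤ H(p') whenever p ≽ p' (across possibly different dimensions), it is additive for Kronecker products, and H(u_2) = log 2. -/

import Mathlib

open scoped BigOperators ENNReal

/-- A probability vector: nonnegative entries summing to 1. -/
def IsProbVec {n : ℕ} (p : Fin n → ℝ) : Prop :=
  (∀ i, 0 ≤ p i) ∧ ∑ i, p i = 1

/-- The uniform probability vector on `n` outcomes. -/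
noncomputable def uniform (n : ℕ) : Fin n → ℝ := fun _ => (n : ℝ)⁻¹

/-- Kronecker (tensor) product of two vectors. -/
noncomputable def kron {n m : ℕ} (p : Fin n → ℝ) (q : Fin m → ℝ) : Fin (n * m) → ℝ :=
  fun i => p (finProdFinEquiv.symm i).1 * q (finProdFinEquiv.symm i).2

/-- Sum of the `k` largest entries (for vectors with nonnegative entries):
the supremum of sums over subsets of at most `k` indices. -/
noncomputable def maxPartialSum {n : ℕ} (p : Fin n → ℝ) (k : ℕ) : ℝ :=
  sSup { x | ∃ s : Finset (Fin n), s.card ≤ k ∧ ∑ i ∈ s, p i = x }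

/-- `p` majorises `q`: every partial sum of the `k` largest entries of `p`
dominates that of `q` (entries beyond a vector's length count as 0). -/
def Majorizes {n m : ℕ} (p : Fin n → ℝ) (q : Fin m → ℝ) : Prop :=
  ∀ k : ℕ, maxPartialSum q k ≤ maxPartialSum p k

/-- A channel: an `n × m` row-stochastic matrix. -/
def IsStochastic {n m : ℕ} (W : Matrix (Fin n) (Fin m) ℝ) : Prop :=
  (∀ i j, 0 ≤ W i j) ∧ ∀ i, ∑ j, W i j = 1

/-- Relative majorisation of pairs: some channel maps `(p, q)` to `(p', q')`. -/
def RelMaj {n m : ℕ} (p q : Fin n → ℝ) (p' q' : Fin m → ℝ) : Prop :=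
  ∃ W : Matrix (Fin n) (Fin m) ℝ, IsStochastic W ∧
    Matrix.vecMul p W = p' ∧ Matrix.vecMul q W = q'

/-- An entropy: a `[0,∞)`-valued function on probability vectors of all finite dimensions
that is monotone under mixing (majorisation), additive for Kronecker products,
and normalised so that `H(u₂) = log 2` (binary logarithm). -/
structure IsEntropy (H : (n : ℕ) → (Fin n → ℝ) → ℝ) : Prop where
  nonneg : ∀ {n : ℕ} (p : Fin n → ℝ), IsProbVec p → 0 ≤ H n p
  mono : ∀ {n m : ℕ} (p : Fin n → ℝ) (p' : Fin m → ℝ),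
    IsProbVec p → IsProbVec p' → Majorizes p p' → H n p ≤ H m p'
  additive : ∀ {n m : ℕ} (p : Fin n → ℝ) (q : Fin m → ℝ),
    IsProbVec p → IsProbVec q → H (n * m) (kron p q) = H n p + H m q
  normalized : H 2 (uniform 2) = Real.logb 2 2

/-- A monotone divergence: a `[0,∞]`-valued function on pairs of probability vectors of
equal finite dimension satisfying the data-processing inequality and `𝔻(1‖1) = 0`. -/
structure IsMonotoneDivergence (D : (n : ℕ) → (Fin n → ℝ) → (Fin n → ℝ) → ℝ≥0∞) : Prop where
  dpi : ∀ {n m : ℕ} (p q : Fin n → ℝ) (p' q' : Fin m → ℝ),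
    IsProbVec p → IsProbVec q → IsProbVec p' → IsProbVec q' →
    RelMaj p q p' q' → D m p' q' ≤ D n p q
  normalized : D 1 (fun _ => 1) (fun _ => 1) = 0

/-- A relative entropy: data-processing inequality, additivity for Kronecker products,
and the normalisation `𝔻(e₁‖u₂) = log 2` (binary logarithm). -/
structure IsRelativeEntropy (D : (n : ℕ) → (Fin n → ℝ) → (Fin n → ℝ) → ℝ≥0∞) : Prop where
  dpi : ∀ {n m : ℕ} (p q : Fin n → ℝ) (p' q' : Fin m → ℝ),
    IsProbVec p → IsProbVec q → IsProbVec p' → IsProbVec q' →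
    RelMaj p q p' q' → D m p' q' ≤ D n p q
  additive : ∀ {n m : ℕ} (p₁ q₁ : Fin n → ℝ) (p₂ q₂ : Fin m → ℝ),
    IsProbVec p₁ → IsProbVec q₁ → IsProbVec p₂ → IsProbVec q₂ →
    D (n * m) (kron p₁ p₂) (kron q₁ q₂) = D n p₁ q₁ + D m p₂ q₂
  normalized : D 2 ![1, 0] ![1/2, 1/2] = ENNReal.ofReal (Real.logb 2 2)

namespace Stmt8

open Finset Matrix

/-! ### basics -/

def e1 (n : ℕ) : Fin n → ℝ := fun i => if i.val = 0 then 1 else 0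

lemma dim_pos {n : ℕ} {p : Fin n → ℝ} (h : IsProbVec p) : 0 < n := by
  rcases Nat.eq_zero_or_pos n with rfl | h0
  · simpa using h.2
  · exact h0

lemma entry_le_one {n : ℕ} {p : Fin n → ℝ} (h : IsProbVec p) (i : Fin n) : p i ≤ 1 := by
  have := Finset.single_le_sum (f := p) (fun j _ => h.1 j) (Finset.mem_univ i)
  simpa [h.2] using this

lemma isProbVec_uniform {n : ℕ} (hn : 0 < n) : IsProbVec (uniform n) := by
  have hn' : (n : ℝ) ≠ 0 := Nat.cast_ne_zero.2 hn.ne'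
  constructor
  · intro i; rw [uniform]; positivity
  · simp only [uniform, Finset.sum_const, Finset.card_univ, Fintype.card_fin, nsmul_eq_mul]
    field_simp

lemma isProbVec_e1 {n : ℕ} (hn : 0 < n) : IsProbVec (e1 n) := by
  constructor
  · intro i; unfold e1; split <;> norm_num
  · have h : ∀ i : Fin n, e1 n i = if i = ⟨0, hn⟩ then 1 else 0 := by
      intro i
      simp only [e1, Fin.ext_iff]
    simp only [h]
    rw [Finset.sum_ite_eq' Finset.univ (⟨0, hn⟩ : Fin n) (fun _ => (1 : ℝ))]
    simp

lemma sum_kron {n m : ℕ} (p : Fin n → ℝ) (q : Fin m → ℝ) :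
    ∑ i, kron p q i = (∑ i, p i) * (∑ j, q j) := by
  rw [← Equiv.sum_comp finProdFinEquiv (kron p q), Fintype.sum_prod_type, Finset.sum_mul_sum]
  simp [kron]

lemma isProbVec_kron {n m : ℕ} {p : Fin n → ℝ} {q : Fin m → ℝ}
    (hp : IsProbVec p) (hq : IsProbVec q) : IsProbVec (kron p q) := by
  constructor
  · intro i; exact mul_nonneg (hp.1 _) (hq.1 _)
  · rw [sum_kron, hp.2, hq.2]; norm_num

lemma kron_uniform (n m : ℕ) : kron (uniform n) (uniform m) = uniform (n * m) := by
  funext i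
  simp only [kron, uniform]
  push_cast
  rw [mul_inv]

lemma kron_e1 (n m : ℕ) : kron (e1 n) (e1 m) = e1 (n * m) := by
  funext i
  obtain ⟨⟨a, b⟩, rfl⟩ := finProdFinEquiv.surjective i
  have hb := b.isLt
  have hm : 0 < m := lt_of_le_of_lt (Nat.zero_le _) hb
  simp only [kron, Equiv.symm_apply_apply, e1, finProdFinEquiv_apply_val]
  by_cases ha0 : a.val = 0 <;> by_cases hb0 : b.val = 0 <;>
    simp [ha0, hb0, Nat.mul_eq_zero, hm.ne']


/-! ### maxPartialSum basics -/

lemma mpsSet_finite {n : ℕ} (p : Fin n → ℝ) (k : ℕ) :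
    {x | ∃ s : Finset (Fin n), s.card ≤ k ∧ ∑ i ∈ s, p i = x}.Finite := by
  apply Set.Finite.subset (Set.finite_range (fun s : Finset (Fin n) => ∑ i ∈ s, p i))
  rintro x ⟨s, _, rfl⟩
  exact ⟨s, rfl⟩

lemma sum_le_mps {n : ℕ} (p : Fin n → ℝ) {k : ℕ} {s : Finset (Fin n)} (hs : s.card ≤ k) :
    ∑ i ∈ s, p i ≤ maxPartialSum p k :=
  le_csSup (mpsSet_finite p k).bddAbove ⟨s, hs, rfl⟩

lemma mps_le {n : ℕ} (p : Fin n → ℝ) {k : ℕ} {M : ℝ}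
    (h : ∀ s : Finset (Fin n), s.card ≤ k → ∑ i ∈ s, p i ≤ M) : maxPartialSum p k ≤ M :=
  csSup_le ⟨0, ∅, by simp, by simp⟩ (by rintro x ⟨s, hs, rfl⟩; exact h s hs)

lemma mps_zero {n : ℕ} (p : Fin n → ℝ) : maxPartialSum p 0 = 0 := by
  apply le_antisymm
  · apply mps_le
    intro s hs
    have : s = ∅ := Finset.card_eq_zero.mp (Nat.le_zero.mp hs)
    simp [this]
  · simpa using sum_le_mps p (s := ∅) (by simp)

lemma mps_nonneg {n : ℕ} {p : Fin n → ℝ} (hp : ∀ i, 0 ≤ p i) (k : ℕ) :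
    0 ≤ maxPartialSum p k := by
  simpa using sum_le_mps p (s := ∅) (by simp)

lemma mps_le_total {n : ℕ} {p : Fin n → ℝ} (hp : ∀ i, 0 ≤ p i) (k : ℕ) :
    maxPartialSum p k ≤ ∑ i, p i := by
  apply mps_le
  intro s _
  exact Finset.sum_le_sum_of_subset_of_nonneg (Finset.subset_univ s) (fun i _ _ => hp i)

/-- transfer of `maxPartialSum` along an injection whose complement carries zeros -/
lemma mps_inj {n M : ℕ} {p : Fin n → ℝ} {q : Fin M → ℝ}
    (ι : Fin n → Fin M) (hι : Function.Injective ι)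
    (hcomp : ∀ x, q (ι x) = p x) (hout : ∀ i, i ∉ Set.range ι → q i = 0) (k : ℕ) :
    maxPartialSum q k = maxPartialSum p k := by
  classical
  apply le_antisymm
  · apply mps_le
    intro s hs
    have hsum : ∑ x ∈ s.preimage ι hι.injOn, q (ι x) = ∑ i ∈ s, q i :=
      Finset.sum_preimage ι s hι.injOn q (fun i _ hi => hout i hi)
    have hcard : (s.preimage ι hι.injOn).card ≤ k := by
      have himg : (s.preimage ι hι.injOn).image ι ⊆ s := by
        intro y hy
        obtain ⟨x, hx, rfl⟩ := Finset.mem_image.1 hy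
        exact Finset.mem_preimage.1 hx
      calc (s.preimage ι hι.injOn).card
          = ((s.preimage ι hι.injOn).image ι).card :=
            (Finset.card_image_of_injective _ hι).symm
        _ ≤ s.card := Finset.card_le_card himg
        _ ≤ k := hs
    calc ∑ i ∈ s, q i = ∑ x ∈ s.preimage ι hι.injOn, p x := by
          rw [← hsum]; exact Finset.sum_congr rfl (fun x _ => hcomp x)
      _ ≤ maxPartialSum p k := sum_le_mps p hcard
  · apply mps_le
    intro t ht
    have : ∑ x ∈ t, p x = ∑ i ∈ t.image ι, q i := by
      rw [Finset.sum_image (fun x _ y _ h => hι h)]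
      exact Finset.sum_congr rfl (fun x _ => (hcomp x).symm)
    rw [this]
    exact sum_le_mps q ((Finset.card_image_le).trans ht)

/-! ### sorted characterization -/

/-- extend a vector on `Fin N` by zero to `ℕ` -/
def ext0 {N : ℕ} (q : Fin N → ℝ) : ℕ → ℝ := fun j => if h : j < N then q ⟨j, h⟩ else 0

lemma ext0_apply_lt {N : ℕ} (q : Fin N → ℝ) {j : ℕ} (h : j < N) : ext0 q j = q ⟨j, h⟩ :=
  dif_pos h

lemma ext0_fin {N : ℕ} (q : Fin N → ℝ) (i : Fin N) : ext0 q i.val = q i := by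
  rw [ext0_apply_lt q i.isLt]

lemma ext0_nonneg {N : ℕ} {q : Fin N → ℝ} (hq : ∀ i, 0 ≤ q i) (j : ℕ) : 0 ≤ ext0 q j := by
  unfold ext0; split
  · exact hq _
  · exact le_rfl

lemma sum_ext0 {N : ℕ} (q : Fin N → ℝ) : ∑ j ∈ Finset.range N, ext0 q j = ∑ i, q i := by
  rw [← Fin.sum_univ_eq_sum_range (ext0 q) N]
  exact Finset.sum_congr rfl (fun i _ => ext0_fin q i)

lemma sum_ext0_mul {N : ℕ} (q r : Fin N → ℝ) :
    ∑ j ∈ Finset.range N, ext0 q j * ext0 r j = ∑ i, q i * r i := by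
  rw [← Fin.sum_univ_eq_sum_range (fun j => ext0 q j * ext0 r j) N]
  exact Finset.sum_congr rfl (fun i _ => by rw [ext0_fin, ext0_fin])

lemma sum_antitone_le {N : ℕ} {q : Fin N → ℝ} (hq : Antitone q) (hq0 : ∀ i, 0 ≤ q i)
    (s : Finset (Fin N)) {k : ℕ} (hk : s.card ≤ k) :
    ∑ i ∈ s, q i ≤ ∑ j ∈ Finset.range k, ext0 q j := by
  classical
  set e := s.orderIsoOfFin (rfl : s.card = s.card) with he
  -- j ≤ e j
  have hle : ∀ j : Fin s.card, (j : ℕ) ≤ ((e j : Fin N) : ℕ) := by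
    intro j
    set g : ℕ → ℕ := fun t => if h : t < s.card then ((e ⟨t, h⟩ : Fin N) : ℕ) else t + N with hg
    have hmono : StrictMono g := by
      intro x y hxy
      by_cases hx : x < s.card
      · by_cases hy : y < s.card
        · simp only [hg, dif_pos hx, dif_pos hy]
          have : e ⟨x, hx⟩ < e ⟨y, hy⟩ := by
            apply (OrderIso.lt_iff_lt e).2
            exact Fin.mk_lt_mk.2 hxy
          exact this
        · simp only [hg, dif_pos hx, dif_neg hy]
          have : ((e ⟨x, hx⟩ : Fin N) : ℕ) < N := (e ⟨x, hx⟩ : Fin N).isLt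
          omega
      · have hy : ¬ y < s.card := fun hy => hx (hxy.trans hy)
        simp only [hg, dif_neg hx, dif_neg hy]
        omega
    have h3 : (j : ℕ) ≤ g (j : ℕ) := hmono.le_apply
    have h4 : g (j : ℕ) = ((e j : Fin N) : ℕ) := by
      simp only [hg, dif_pos j.isLt, Fin.eta]
    rwa [h4] at h3
  have hsum : ∑ i ∈ s, q i = ∑ j : Fin s.card, q (e j) := by
    rw [← Finset.sum_coe_sort s q]
    exact (Equiv.sum_comp e.toEquiv (fun x : s => q x)).symm
  rw [hsum]
  have hcardN : s.card ≤ N := by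
    simpa using Finset.card_le_card (Finset.subset_univ s)
  have step1 : ∑ j : Fin s.card, q (e j) ≤ ∑ j : Fin s.card, ext0 q (j : ℕ) := by
    apply Finset.sum_le_sum
    intro j _
    have hjN : (j : ℕ) < N := lt_of_lt_of_le j.isLt hcardN
    rw [ext0_apply_lt q hjN]
    exact hq (by simpa [Fin.le_def] using hle j)
  have step2 : ∑ j : Fin s.card, ext0 q (j : ℕ) = ∑ j ∈ Finset.range s.card, ext0 q j :=
    Fin.sum_univ_eq_sum_range (ext0 q) s.card
  have step3 : ∑ j ∈ Finset.range s.card, ext0 q j ≤ ∑ j ∈ Finset.range k, ext0 q j :=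
    Finset.sum_le_sum_of_subset_of_nonneg (Finset.range_subset_range.2 hk)
      (fun j _ _ => ext0_nonneg hq0 j)
  linarith

lemma prefix_le_mps {N : ℕ} (q : Fin N → ℝ) (k : ℕ) :
    ∑ j ∈ Finset.range k, ext0 q j ≤ maxPartialSum q k := by
  classical
  set c := min k N with hc
  have h1 : ∑ j ∈ Finset.range k, ext0 q j = ∑ j ∈ Finset.range c, ext0 q j := by
    symm
    apply Finset.sum_subset (Finset.range_subset_range.2 (min_le_left _ _))
    intro j hj hjc
    simp only [Finset.mem_range] at hj hjc
    have : ¬ j < N := by omega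
    simp [ext0, this]
  set s : Finset (Fin N) := Finset.univ.filter (fun i : Fin N => (i : ℕ) < c) with hs
  have h2 : ∑ i ∈ s, q i = ∑ j ∈ Finset.range c, ext0 q j := by
    rw [Finset.sum_filter]
    have : ∀ i : Fin N, (if (i : ℕ) < c then q i else 0)
        = (fun j : ℕ => if j < c then ext0 q j else 0) (i : ℕ) := by
      intro i
      by_cases h : (i : ℕ) < c <;> simp [h, ext0_fin]
    rw [Finset.sum_congr rfl (fun i _ => this i),
      Fin.sum_univ_eq_sum_range (fun j => if j < c then ext0 q j else 0) N]
    rw [← Finset.sum_filter]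
    congr 1
    ext j
    simp only [Finset.mem_filter, Finset.mem_range, hc]
    omega
  have hcard : s.card ≤ k := by
    have h5 : s.card ≤ (Finset.range c).card := by
      refine Finset.card_le_card_of_injOn (fun i : Fin N => (i : ℕ)) ?_ ?_
      · intro i hi
        simp only [hs, Finset.mem_coe, Finset.mem_filter] at hi
        simpa using hi.2
      · intro i _ j _ h
        exact Fin.ext h
    rw [Finset.card_range] at h5
    exact h5.trans (Nat.min_le_left k N)
  rw [h1, ← h2]
  exact sum_le_mps q hcard

lemma mps_sorted {N : ℕ} {q : Fin N → ℝ} (hq : Antitone q) (hq0 : ∀ i, 0 ≤ q i) (k : ℕ) :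
    maxPartialSum q k = ∑ j ∈ Finset.range k, ext0 q j :=
  le_antisymm (mps_le q (fun s hs => sum_antitone_le hq hq0 s hs)) (prefix_le_mps q k)

lemma exists_antitone_perm {N : ℕ} (p : Fin N → ℝ) :
    ∃ σ : Equiv.Perm (Fin N), Antitone (p ∘ σ) := by
  refine ⟨Tuple.sort (fun i => -p i), ?_⟩
  have h := Tuple.monotone_sort (fun i => -p i)
  intro i j hij
  have h2 := h hij
  simp only [Function.comp_apply] at h2 ⊢
  linarith

lemma mps_perm {N : ℕ} (p : Fin N → ℝ) (σ : Equiv.Perm (Fin N)) (k : ℕ) :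
    maxPartialSum p k = maxPartialSum (p ∘ σ) k := by
  apply mps_inj σ σ.injective (fun x => rfl)
  intro i hi
  exact absurd ⟨σ.symm i, σ.apply_symm_apply i⟩ hi

/-! ### Abel summation -/

lemma abel_aux : ∀ (N : ℕ) (c d : ℕ → ℝ), (∀ i j, i ≤ j → j < N → c j ≤ c i) →
    (∀ k, k ≤ N → 0 ≤ ∑ i ∈ Finset.range k, d i) →
    c (N - 1) * ∑ i ∈ Finset.range N, d i ≤ ∑ i ∈ Finset.range N, c i * d i := by
  intro N
  induction N with
  | zero => simp
  | succ N ih =>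
    intro c d hc hd
    have h1 : c (N - 1) * ∑ i ∈ Finset.range N, d i ≤ ∑ i ∈ Finset.range N, c i * d i :=
      ih c d (fun i j hij hj => hc i j hij (hj.trans (Nat.lt_succ_self N)))
        (fun k hk => hd k (hk.trans (Nat.le_succ N)))
    rw [Finset.sum_range_succ, Finset.sum_range_succ]
    have hcN : c N ≤ c (N - 1) := hc (N - 1) N (Nat.sub_le N 1) (Nat.lt_succ_self N)
    have hDN : 0 ≤ ∑ i ∈ Finset.range N, d i := hd N (Nat.le_succ N)
    have hNsub : N + 1 - 1 = N := Nat.succ_sub_one N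
    rw [hNsub]
    have h2 : c N * ∑ i ∈ Finset.range N, d i ≤ c (N - 1) * ∑ i ∈ Finset.range N, d i :=
      mul_le_mul_of_nonneg_right hcN hDN
    nlinarith [h1, h2]


/-! ### permutation matrices and HLP -/

def permMat {N : ℕ} (σ : Equiv.Perm (Fin N)) : Matrix (Fin N) (Fin N) ℝ :=
  fun i j => if i = σ j then 1 else 0

lemma permMat_nonneg {N : ℕ} (σ : Equiv.Perm (Fin N)) (i j : Fin N) : 0 ≤ permMat σ i j := by
  unfold permMat; split <;> norm_num

lemma permMat_row_sum {N : ℕ} (σ : Equiv.Perm (Fin N)) (i : Fin N) :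
    ∑ j, permMat σ i j = 1 := by
  unfold permMat
  have h : ∀ j : Fin N, (if i = σ j then (1:ℝ) else 0) = if j = σ.symm i then 1 else 0 := by
    intro j
    by_cases h : i = σ j
    · have h2 : j = σ.symm i := by rw [h, Equiv.symm_apply_apply]
      rw [if_pos h, if_pos h2]
    · have h2 : ¬ j = σ.symm i := fun hh => h (by rw [hh, Equiv.apply_symm_apply])
      rw [if_neg h, if_neg h2]
  rw [Finset.sum_congr rfl (fun j _ => h j), Finset.sum_ite_eq' Finset.univ (σ.symm i) (fun _ => (1:ℝ))]
  simp

lemma vecMul_permMat {N : ℕ} (x : Fin N → ℝ) (σ : Equiv.Perm (Fin N)) :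
    Matrix.vecMul x (permMat σ) = x ∘ σ := by
  funext j
  simp only [Matrix.vecMul, dotProduct, permMat, mul_ite, mul_one, mul_zero]
  rw [Finset.sum_ite_eq' Finset.univ (σ j) x]
  simp

/-- Hardy–Littlewood–Pólya: majorisation yields a uniform-preserving stochastic matrix. -/
lemma hlp {N : ℕ} {a b : Fin N → ℝ} (ha : IsProbVec a) (hb : IsProbVec b)
    (hmaj : ∀ k, maxPartialSum b k ≤ maxPartialSum a k) :
    ∃ W : Matrix (Fin N) (Fin N) ℝ, IsStochastic W ∧ Matrix.vecMul a W = b ∧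
      Matrix.vecMul (uniform N) W = uniform N := by
  classical
  have hbS : b ∈ convexHull ℝ (Set.range fun σ : Equiv.Perm (Fin N) => a ∘ σ) := by
    by_contra hbS
    obtain ⟨f, u, hfu, hub⟩ := geometric_hahn_banach_closed_point
      (convex_convexHull ℝ _) (((Set.finite_range _).isCompact_convexHull (𝕜 := ℝ)).isClosed) hbS
    set c : Fin N → ℝ := fun i => f (fun j => if i = j then 1 else 0) with hcdef
    have hfv : ∀ v : Fin N → ℝ, f v = ∑ i, v i * c i := by
      intro v
      conv_lhs => rw [pi_eq_sum_univ v]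
      rw [map_sum]
      refine Finset.sum_congr rfl (fun i _ => ?_)
      rw [f.map_smul]
      simp [hcdef, smul_eq_mul]
    obtain ⟨α, hα⟩ := exists_antitone_perm a
    obtain ⟨ρ, hρ⟩ := exists_antitone_perm b
    obtain ⟨τ, hτ⟩ := exists_antitone_perm c
    have h1 : f b = ∑ i, c (τ i) * b (τ i) := by
      rw [hfv b, ← Equiv.sum_comp τ (fun j => b j * c j)]
      exact Finset.sum_congr rfl (fun i _ => by ring)
    have h2 : ∑ i, c (τ i) * b (τ i) ≤ ∑ i, c (τ i) * b (ρ i) := by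
      have hmono : Monovary (c ∘ τ) (b ∘ ρ) := by
        intro i j hij
        by_contra hcc
        push_neg at hcc
        have hji : ¬ i ≤ j := fun h => absurd (hρ h) (not_le.2 hij)
        exact absurd (hτ (le_of_not_ge hji)) (not_le.2 hcc)
      have h := hmono.sum_smul_comp_perm_le_sum_smul (σ := τ.trans ρ.symm)
      simp only [smul_eq_mul, Function.comp_apply, Equiv.trans_apply,
        Equiv.apply_symm_apply] at h
      exact h
    have h3 : ∑ i, c (τ i) * b (ρ i) ≤ ∑ i, c (τ i) * a (α i) := by
      set C : ℕ → ℝ := ext0 (c ∘ τ) with hC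
      set d : ℕ → ℝ := fun j => ext0 (a ∘ α) j - ext0 (b ∘ ρ) j with hd
      have hCanti : ∀ i j, i ≤ j → j < N → C j ≤ C i := by
        intro i j hij hj
        have hi : i < N := lt_of_le_of_lt hij hj
        rw [hC, ext0_apply_lt _ hj, ext0_apply_lt _ hi]
        exact hτ (by simpa [Fin.le_def] using hij)
      have hpre : ∀ k, k ≤ N → 0 ≤ ∑ i ∈ Finset.range k, d i := by
        intro k hk
        have hsa : ∑ j ∈ Finset.range k, ext0 (a ∘ α) j = maxPartialSum a k := by
          rw [← mps_sorted hα (fun i => ha.1 (α i)) k, ← mps_perm a α k]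
        have hsb : ∑ j ∈ Finset.range k, ext0 (b ∘ ρ) j = maxPartialSum b k := by
          rw [← mps_sorted hρ (fun i => hb.1 (ρ i)) k, ← mps_perm b ρ k]
        simp only [hd, Finset.sum_sub_distrib, hsa, hsb, sub_nonneg]
        exact hmaj k
      have htot : ∑ i ∈ Finset.range N, d i = 0 := by
        simp only [hd, Finset.sum_sub_distrib, sum_ext0]
        have h1 : ∑ i, (a ∘ α) i = 1 := by
          simp only [Function.comp_apply]
          rw [Equiv.sum_comp α a]; exact ha.2
        have h2 : ∑ i, (b ∘ ρ) i = 1 := by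
          simp only [Function.comp_apply]
          rw [Equiv.sum_comp ρ b]; exact hb.2
        rw [h1, h2]; ring
      have habel := abel_aux N C d hCanti hpre
      rw [htot, mul_zero] at habel
      have hexp : ∑ i ∈ Finset.range N, C i * d i
          = ∑ i, c (τ i) * a (α i) - ∑ i, c (τ i) * b (ρ i) := by
        simp only [hd, hC, mul_sub]
        rw [Finset.sum_sub_distrib, sum_ext0_mul, sum_ext0_mul]
        rfl
      rw [hexp] at habel
      linarith
    have h4 : f (a ∘ (τ.symm.trans α)) = ∑ i, c (τ i) * a (α i) := by
      rw [hfv, ← Equiv.sum_comp τ (fun j => (a ∘ (τ.symm.trans α)) j * c j)]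
      refine Finset.sum_congr rfl (fun i _ => ?_)
      simp only [Function.comp_apply, Equiv.trans_apply, Equiv.symm_apply_apply]
      ring
    have h5 : f (a ∘ (τ.symm.trans α)) < u :=
      hfu _ (subset_convexHull ℝ _ ⟨_, rfl⟩)
    linarith
  rw [_root_.convexHull_eq] at hbS
  obtain ⟨ι, t, w, z, hw0, hw1, hz, hcm⟩ := hbS
  choose σs hσs using hz
  set W : Matrix (Fin N) (Fin N) ℝ :=
    ∑ i ∈ t.attach, w i.1 • permMat (σs i.1 i.2) with hWdef
  have hWentry : ∀ r s, W r s = ∑ i ∈ t.attach, w i.1 * permMat (σs i.1 i.2) r s := by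
    intro r s
    rw [hWdef, Matrix.sum_apply]
    exact Finset.sum_congr rfl (fun i _ => by rw [Matrix.smul_apply, smul_eq_mul])
  have hvm : ∀ (x : Fin N → ℝ) (s : Fin N),
      Matrix.vecMul x W s = ∑ i ∈ t.attach, w i.1 * x (σs i.1 i.2 s) := by
    intro x s
    simp only [Matrix.vecMul, dotProduct]
    calc ∑ r, x r * W r s
        = ∑ r, ∑ i ∈ t.attach, x r * (w i.1 * permMat (σs i.1 i.2) r s) := by
          refine Finset.sum_congr rfl (fun r _ => ?_)
          rw [hWentry r s, Finset.mul_sum]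
      _ = ∑ i ∈ t.attach, ∑ r, x r * (w i.1 * permMat (σs i.1 i.2) r s) := Finset.sum_comm
      _ = ∑ i ∈ t.attach, w i.1 * x (σs i.1 i.2 s) := by
          refine Finset.sum_congr rfl (fun i _ => ?_)
          have h := congrFun (vecMul_permMat x (σs i.1 i.2)) s
          simp only [Matrix.vecMul, dotProduct, Function.comp_apply] at h
          calc ∑ r, x r * (w i.1 * permMat (σs i.1 i.2) r s)
              = w i.1 * ∑ r, x r * permMat (σs i.1 i.2) r s := by
                rw [Finset.mul_sum]; exact Finset.sum_congr rfl (fun r _ => by ring)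
            _ = w i.1 * x (σs i.1 i.2 s) := by rw [h]
  refine ⟨W, ⟨?_, ?_⟩, ?_, ?_⟩
  · intro r s
    rw [hWentry]
    exact Finset.sum_nonneg fun i _ => mul_nonneg (hw0 i.1 i.2) (permMat_nonneg _ _ _)
  · intro r
    calc ∑ s, W r s = ∑ s, ∑ i ∈ t.attach, w i.1 * permMat (σs i.1 i.2) r s :=
          Finset.sum_congr rfl (fun s _ => hWentry r s)
      _ = ∑ i ∈ t.attach, ∑ s, w i.1 * permMat (σs i.1 i.2) r s := Finset.sum_comm
      _ = ∑ i ∈ t.attach, w i.1 := by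
          refine Finset.sum_congr rfl (fun i _ => ?_)
          rw [← Finset.mul_sum, permMat_row_sum, mul_one]
      _ = 1 := by rw [Finset.sum_attach t w]; exact hw1
  · funext s
    rw [hvm a s]
    have hz' : ∀ i ∈ t.attach, w i.1 * a (σs i.1 i.2 s) = w i.1 * z i.1 s := by
      intro i _
      have := congrFun (hσs i.1 i.2) s
      simp only [Function.comp_apply] at this
      rw [this]
    rw [Finset.sum_congr rfl hz', Finset.sum_attach t (fun i => w i * z i s)]
    have hb' : b s = (t.centerMass w z) s := by rw [hcm]
    rw [hb', Finset.centerMass, hw1]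
    simp [Finset.sum_apply]
  · funext s
    rw [hvm (uniform N) s]
    have : ∀ i ∈ t.attach, w i.1 * uniform N (σs i.1 i.2 s) = w i.1 * (N:ℝ)⁻¹ := by
      intro i _; rfl
    rw [Finset.sum_congr rfl this, ← Finset.sum_mul, Finset.sum_attach t w, hw1, one_mul]
    rfl


/-! ### channels and divergence facts -/

lemma one_prob : IsProbVec (fun _ : Fin 1 => (1:ℝ)) := ⟨fun _ => one_pos.le, by simp⟩

lemma relMaj_collapse {n : ℕ} {p q : Fin n → ℝ} (hp : IsProbVec p) (hq : IsProbVec q) :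
    RelMaj p q (fun _ : Fin 1 => 1) (fun _ : Fin 1 => 1) := by
  refine ⟨fun _ _ => 1, ⟨fun i j => one_pos.le, fun i => by simp⟩, ?_, ?_⟩
  · funext j; simp [Matrix.vecMul, dotProduct, hp.2]
  · funext j; simp [Matrix.vecMul, dotProduct, hq.2]

lemma relMaj_expand {n : ℕ} {r : Fin n → ℝ} (hr : IsProbVec r) :
    RelMaj (fun _ : Fin 1 => 1) (fun _ : Fin 1 => 1) r r := by
  refine ⟨fun _ j => r j, ⟨fun i j => hr.1 j, fun i => hr.2⟩, ?_, ?_⟩ <;>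
    · funext j; simp [Matrix.vecMul, dotProduct]


lemma vecMul_e1 {m k : ℕ} (hm : 0 < m) (W : Matrix (Fin m) (Fin k) ℝ) :
    Matrix.vecMul (e1 m) W = W ⟨0, hm⟩ := by
  funext j
  simp only [Matrix.vecMul, dotProduct, e1]
  have h : ∀ i : Fin m, (if (i:ℕ) = 0 then (1:ℝ) else 0) * W i j
      = if i = ⟨0, hm⟩ then W i j else 0 := by
    intro i
    by_cases h : i = ⟨0, hm⟩
    · subst h; simp
    · have h2 : ¬ (i:ℕ) = 0 := fun hh => h (Fin.ext hh)
      simp [h2, h]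
  rw [Finset.sum_congr rfl (fun i _ => h i),
    Finset.sum_ite_eq' Finset.univ _ (fun i => W i j)]
  simp

lemma sum_ite_fin {m : ℕ} (hm : 0 < m) (A B : ℝ) :
    ∑ i : Fin m, (if (i:ℕ) = 0 then A else B) = A + ((m:ℝ) - 1) * B := by
  have h : ∀ i : Fin m, (if (i:ℕ) = 0 then A else B)
      = B + (if i = ⟨0, hm⟩ then A - B else 0) := by
    intro i
    by_cases h : i = ⟨0, hm⟩
    · subst h; simp
    · have h2 : ¬ (i:ℕ) = 0 := fun hh => h (Fin.ext hh)
      simp [h2, h]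
  rw [Finset.sum_congr rfl (fun i _ => h i), Finset.sum_add_distrib,
    Finset.sum_ite_eq' Finset.univ _ (fun _ => A - B)]
  simp only [Finset.mem_univ, if_true, Finset.sum_const, Finset.card_univ, Fintype.card_fin,
    nsmul_eq_mul]
  ring

variable {D : (n : ℕ) → (Fin n → ℝ) → (Fin n → ℝ) → ℝ≥0∞}

lemma prob_e10 : IsProbVec (![1, 0] : Fin 2 → ℝ) :=
  ⟨by intro i; fin_cases i <;> norm_num, by simp [Fin.sum_univ_two]⟩

lemma prob_u2 : IsProbVec (![1/2, 1/2] : Fin 2 → ℝ) :=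
  ⟨by intro i; fin_cases i <;> norm_num, by norm_num [Fin.sum_univ_two]⟩

lemma D_11 (hD : IsRelativeEntropy D) : D 1 (fun _ => 1) (fun _ => 1) = 0 := by
  have hfin : D 1 (fun _ => 1) (fun _ => 1) ≠ ⊤ := by
    have hle := hD.dpi ![1,0] ![1/2,1/2] _ _ prob_e10 prob_u2 one_prob one_prob
      (relMaj_collapse prob_e10 prob_u2)
    exact ne_top_of_le_ne_top (by rw [hD.normalized]; exact ENNReal.ofReal_ne_top) hle
  have hadd := hD.additive (n := 1) (m := 1) (fun _ => 1) (fun _ => 1) (fun _ => 1) (fun _ => 1)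
    one_prob one_prob one_prob one_prob
  have hk : kron (fun _ : Fin 1 => (1:ℝ)) (fun _ : Fin 1 => (1:ℝ))
      = (fun _ : Fin (1*1) => (1:ℝ)) := by
    funext i; simp [kron]
  rw [hk] at hadd
  have h11 : D (1*1) (fun _ : Fin (1*1) => (1:ℝ)) (fun _ => 1)
      = D 1 (fun _ : Fin 1 => (1:ℝ)) (fun _ => 1) := rfl
  have key : D 1 (fun _ : Fin 1 => (1:ℝ)) (fun _ => 1)
      = D 1 (fun _ : Fin 1 => (1:ℝ)) (fun _ => 1) + D 1 (fun _ : Fin 1 => (1:ℝ)) (fun _ => 1) :=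
    h11.symm.trans hadd
  have key2 : D 1 (fun _ : Fin 1 => (1:ℝ)) (fun _ => 1) + 0
      = D 1 (fun _ : Fin 1 => (1:ℝ)) (fun _ => 1) + D 1 (fun _ : Fin 1 => (1:ℝ)) (fun _ => 1) := by
    rw [add_zero]; exact key
  exact ((ENNReal.add_right_inj hfin).1 key2).symm

lemma D_unif (hD : IsRelativeEntropy D) {n : ℕ} (hn : 0 < n) :
    D n (uniform n) (uniform n) = 0 := by
  have h := hD.dpi (fun _ : Fin 1 => 1) (fun _ => 1) (uniform n) (uniform n)
    one_prob one_prob (isProbVec_uniform hn) (isProbVec_uniform hn)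
    (relMaj_expand (isProbVec_uniform hn))
  rw [D_11 hD] at h
  exact le_antisymm h zero_le

lemma D_le_pure (hD : IsRelativeEntropy D) {n : ℕ} {p : Fin n → ℝ} (hp : IsProbVec p) :
    D n p (uniform n) ≤ D n (e1 n) (uniform n) := by
  have hn : 0 < n := dim_pos hp
  have hmaj : ∀ k, maxPartialSum p k ≤ maxPartialSum (e1 n) k := by
    intro k
    cases k with
    | zero => rw [mps_zero, mps_zero]
    | succ j =>
      have h1 : maxPartialSum p (j+1) ≤ 1 := by
        have := mps_le_total hp.1 (j+1)
        rwa [hp.2] at this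
      have h2 : (1:ℝ) ≤ maxPartialSum (e1 n) (j+1) := by
        have hs := sum_le_mps (e1 n) (k := j+1) (s := {(⟨0, hn⟩ : Fin n)}) (by simp)
        rw [Finset.sum_singleton] at hs
        simpa [e1] using hs
      linarith
  obtain ⟨W, hW, hWa, hWu⟩ := hlp (isProbVec_e1 hn) hp hmaj
  exact hD.dpi (e1 n) (uniform n) p (uniform n) (isProbVec_e1 hn) (isProbVec_uniform hn)
    hp (isProbVec_uniform hn) ⟨W, hW, hWa, hWu⟩

lemma f_mul (hD : IsRelativeEntropy D) {n m : ℕ} (hn : 0 < n) (hm : 0 < m) :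
    D (n*m) (e1 (n*m)) (uniform (n*m))
      = D n (e1 n) (uniform n) + D m (e1 m) (uniform m) := by
  rw [← kron_e1, ← kron_uniform]
  exact hD.additive _ _ _ _ (isProbVec_e1 hn) (isProbVec_uniform hn)
    (isProbVec_e1 hm) (isProbVec_uniform hm)

lemma e1_one : e1 1 = (fun _ : Fin 1 => (1:ℝ)) := by
  funext i
  have : (i : ℕ) = 0 := by omega
  simp [e1, this]

lemma uniform_one : uniform 1 = (fun _ : Fin 1 => (1:ℝ)) := by
  funext i; simp [uniform]

lemma f_one (hD : IsRelativeEntropy D) : D 1 (e1 1) (uniform 1) = 0 := by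
  rw [e1_one, uniform_one]
  exact D_11 hD

lemma f_two (hD : IsRelativeEntropy D) : D 2 (e1 2) (uniform 2) = 1 := by
  have he : e1 2 = ![1, 0] := by
    funext i; fin_cases i <;> simp [e1]
  have hu : uniform 2 = ![1/2, 1/2] := by
    funext i; fin_cases i <;> norm_num [uniform]
  rw [he, hu, hD.normalized, Real.logb_self_eq_one (by norm_num : (1:ℝ) < 2)]
  exact ENNReal.ofReal_one

lemma f_mono (hD : IsRelativeEntropy D) {n m : ℕ} (hn : 0 < n) (hnm : n ≤ m) :
    D n (e1 n) (uniform n) ≤ D m (e1 m) (uniform m) := by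
  rcases eq_or_lt_of_le hnm with rfl | hlt
  · exact le_rfl
  have hm2 : 2 ≤ m := by omega
  have hm : 0 < m := by omega
  have hmR : (1:ℝ) < (m:ℝ) := by exact_mod_cast hm2.trans_lt' one_lt_two
  have hnR : (0:ℝ) < (n:ℝ) := by exact_mod_cast hn
  have hm1ne : (m:ℝ) - 1 ≠ 0 := by linarith
  have hdivge : (1:ℝ) ≤ (m:ℝ) / (n:ℝ) := (one_le_div hnR).2 (by exact_mod_cast hnm)
  have hnne : (n:ℝ) ≠ 0 := hnR.ne'
  have hmne : (m:ℝ) ≠ 0 := by positivity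
  set W : Matrix (Fin m) (Fin n) ℝ :=
    fun i j => if (i:ℕ) = 0 then e1 n j else ((m:ℝ)/(n:ℝ) - e1 n j)/((m:ℝ)-1) with hWdef
  have hWstoch : IsStochastic W := by
    constructor
    · intro i j
      simp only [hWdef]
      by_cases hi : (i:ℕ) = 0
      · simp only [hi, if_true]
        unfold e1; split <;> norm_num
      · simp only [hi, if_false]
        apply div_nonneg _ (by linarith)
        unfold e1; split
        · linarith
        · simp only [sub_zero]; positivity
    · intro i
      simp only [hWdef]
      by_cases hi : (i:ℕ) = 0
      · simp only [hi, if_true]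
        exact (isProbVec_e1 hn).2
      · simp only [hi, if_false]
        rw [← Finset.sum_div, Finset.sum_sub_distrib, Finset.sum_const, Finset.card_univ,
          Fintype.card_fin, (isProbVec_e1 hn).2, nsmul_eq_mul]
        have hxx : (n:ℝ) * ((m:ℝ)/(n:ℝ)) = (m:ℝ) := by field_simp
        rw [hxx, div_eq_one_iff_eq hm1ne]
  have hWa : Matrix.vecMul (e1 m) W = e1 n := by
    rw [vecMul_e1 hm W]
    funext j
    simp [hWdef]
  have hWu : Matrix.vecMul (uniform m) W = uniform n := by
    funext j
    simp only [Matrix.vecMul, dotProduct, uniform]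
    rw [← Finset.mul_sum]
    have hcol : ∑ i : Fin m, W i j = (m:ℝ)/(n:ℝ) := by
      simp only [hWdef]
      rw [sum_ite_fin hm (e1 n j) (((m:ℝ)/(n:ℝ) - e1 n j)/((m:ℝ)-1))]
      have hcc : ((m:ℝ)-1) * (((m:ℝ)/(n:ℝ) - e1 n j)/((m:ℝ)-1))
          = (m:ℝ)/(n:ℝ) - e1 n j := by
        field_simp
      rw [hcc]
      ring
    rw [hcol, div_eq_mul_inv, ← mul_assoc, inv_mul_cancel₀ hmne, one_mul]
  exact hD.dpi (e1 m) (uniform m) (e1 n) (uniform n) (isProbVec_e1 hm)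
    (isProbVec_uniform hm) (isProbVec_e1 hn) (isProbVec_uniform hn) ⟨W, hWstoch, hWa, hWu⟩

lemma f_pow2 (hD : IsRelativeEntropy D) (k : ℕ) :
    D (2^k) (e1 (2^k)) (uniform (2^k)) = (k : ℝ≥0∞) := by
  induction k with
  | zero =>
    simpa using f_one hD
  | succ k ih =>
    rw [pow_succ]
    rw [f_mul hD (pow_pos two_pos k) two_pos, ih, f_two hD]
    push_cast
    ring

lemma f_ne_top (hD : IsRelativeEntropy D) {n : ℕ} (hn : 0 < n) :
    D n (e1 n) (uniform n) ≠ ⊤ := by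
  have h1 : n ≤ 2^n := (Nat.lt_two_pow_self).le
  have h2 := f_mono hD hn h1
  rw [f_pow2 hD n] at h2
  exact ne_top_of_le_ne_top (ENNReal.natCast_ne_top n) h2

lemma D_ne_top (hD : IsRelativeEntropy D) {n : ℕ} {p : Fin n → ℝ} (hp : IsProbVec p) :
    D n p (uniform n) ≠ ⊤ :=
  ne_top_of_le_ne_top (f_ne_top hD (dim_pos hp)) (D_le_pure hD hp)

lemma f_eq (hD : IsRelativeEntropy D) {n : ℕ} (hn : 0 < n) :
    D n (e1 n) (uniform n) = ENNReal.ofReal (Real.logb 2 n) := by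
  set g : ℕ → ℝ := fun j => (D j (e1 j) (uniform j)).toReal with hg
  have hg1 : g 1 = 0 := by rw [hg]; simp [f_one hD]
  have hg2 : g 2 = 1 := by rw [hg]; simp [f_two hD]
  have hgmul : ∀ i j : ℕ, 0 < i → 0 < j → g (i * j) = g i + g j := by
    intro i j hi hj
    rw [hg]
    simp only
    rw [f_mul hD hi hj, ENNReal.toReal_add (f_ne_top hD hi) (f_ne_top hD hj)]
  have hgpow : ∀ (j : ℕ), 0 < j → ∀ k : ℕ, g (j ^ k) = k * g j := by
    intro j hj k
    induction k with
    | zero => simpa using hg1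
    | succ k ih =>
      rw [pow_succ, hgmul _ _ (pow_pos hj k) hj, ih]
      push_cast
      ring
  have hgmono : ∀ i j : ℕ, 0 < i → i ≤ j → g i ≤ g j := by
    intro i j hi hij
    exact ENNReal.toReal_mono (f_ne_top hD (hi.trans_le hij)) (f_mono hD hi hij)
  have hmain : g n = Real.logb 2 n := by
    rcases eq_or_lt_of_le (Nat.one_le_iff_ne_zero.mpr hn.ne') with h1 | h2
    · rw [← h1, hg1]
      norm_num
    · -- n ≥ 2
      have hn2 : 2 ≤ n := h2
      have hnR1 : (1:ℝ) < (n:ℝ) := by exact_mod_cast h2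
      have key : ∀ k : ℕ, 0 < k → |g n - Real.logb 2 n| ≤ 1 / k := by
        intro k hk
        set a := Nat.log 2 (n ^ k) with ha
        have hnk0 : n ^ k ≠ 0 := (pow_pos hn k).ne'
        have h1 : 2 ^ a ≤ n ^ k := Nat.pow_log_le_self 2 hnk0
        have h2' : n ^ k < 2 ^ (a + 1) := Nat.lt_pow_succ_log_self (by norm_num) _
        have hkR : (0:ℝ) < (k:ℝ) := by exact_mod_cast hk
        -- g bounds
        have hga : (a : ℝ) ≤ k * g n := by
          have := hgmono _ _ (pow_pos two_pos a) h1
          rw [hgpow 2 two_pos a, hgpow n hn k, hg2, mul_one] at this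
          exact this
        have hgb : (k:ℝ) * g n ≤ (a:ℝ) + 1 := by
          have := hgmono _ _ (pow_pos hn k) h2'.le
          rw [hgpow 2 two_pos (a+1), hgpow n hn k, hg2, mul_one] at this
          push_cast at this
          linarith
        -- logb bounds
        have hcast1 : ((2:ℝ)) ^ a ≤ ((n:ℝ)) ^ k := by exact_mod_cast h1
        have hcast2 : ((n:ℝ)) ^ k ≤ ((2:ℝ)) ^ (a+1) := by exact_mod_cast h2'.le
        have hla : (a : ℝ) ≤ k * Real.logb 2 n := by
          have h := (Real.logb_le_logb_of_le (by norm_num : (1:ℝ) < 2)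
            (by positivity) hcast1)
          rwa [Real.logb_pow, Real.logb_pow, Real.logb_self_eq_one (by norm_num : (1:ℝ) < 2),
            mul_one] at h
        have hlb : (k:ℝ) * Real.logb 2 n ≤ (a:ℝ) + 1 := by
          have h := (Real.logb_le_logb_of_le (by norm_num : (1:ℝ) < 2)
            (by positivity) hcast2)
          rwa [Real.logb_pow, Real.logb_pow, Real.logb_self_eq_one (by norm_num : (1:ℝ) < 2),
            mul_one, Nat.cast_add, Nat.cast_one] at h
        have habs : |g n - Real.logb 2 n| * k ≤ 1 := by
          have h1' : |(g n - Real.logb 2 n) * k| ≤ 1 := by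
            rw [abs_le]
            constructor <;> nlinarith
          calc |g n - Real.logb 2 n| * (k:ℝ)
              = |(g n - Real.logb 2 n) * k| := by
                rw [abs_mul, abs_of_nonneg hkR.le]
            _ ≤ 1 := h1'
        exact (le_div_iff₀ hkR).2 habs
      by_contra hne
      have habs0 : 0 < |g n - Real.logb 2 n| := by
        apply abs_pos.2
        intro h0
        exact hne (by linarith)
      obtain ⟨k, hk⟩ := exists_nat_one_div_lt habs0
      have := key (k+1) (Nat.succ_pos k)
      push_cast at this hk
      linarith
  rw [← ENNReal.ofReal_toReal (f_ne_top hD hn)]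
  rw [show (D n (e1 n) (uniform n)).toReal = g n from rfl, hmain]


lemma mps_kron_e1 {n m : ℕ} (p : Fin n → ℝ) (hm : 0 < m) (k : ℕ) :
    maxPartialSum (kron p (e1 m)) k = maxPartialSum p k := by
  apply mps_inj (fun x : Fin n => finProdFinEquiv (x, (⟨0, hm⟩ : Fin m)))
  · intro x y h
    have h2 := finProdFinEquiv.injective h
    exact congrArg Prod.fst h2
  · intro x
    simp [kron, Equiv.symm_apply_apply, e1]
  · intro i hi
    by_contra hne
    apply hi
    have h2 : e1 m (finProdFinEquiv.symm i).2 ≠ 0 := by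
      intro h0
      apply hne
      show p (finProdFinEquiv.symm i).1 * e1 m (finProdFinEquiv.symm i).2 = 0
      rw [h0, mul_zero]
    have h3 : ((finProdFinEquiv.symm i).2 : ℕ) = 0 := by
      by_contra h3
      exact h2 (by unfold e1; rw [if_neg h3])
    refine ⟨(finProdFinEquiv.symm i).1, ?_⟩
    have h4 : ((finProdFinEquiv.symm i).1, (⟨0, hm⟩ : Fin m)) = finProdFinEquiv.symm i := by
      refine Prod.ext rfl ?_
      exact (Fin.ext h3).symm
    show finProdFinEquiv ((finProdFinEquiv.symm i).1, (⟨0, hm⟩ : Fin m)) = i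
    rw [h4, Equiv.apply_symm_apply]

lemma mps_reindex {n m : ℕ} (h : n = m) (q : Fin m → ℝ) (k : ℕ) :
    maxPartialSum q k = maxPartialSum (fun i : Fin n => q (finCongr h i)) k := by
  apply mps_inj (fun x : Fin n => finCongr h x) (finCongr h).injective (fun x => rfl)
  intro i hi
  exact absurd ⟨(finCongr h).symm i, (finCongr h).apply_symm_apply i⟩ hi

end Stmt8

open Stmt8 in
/-- for a relative entropy `𝔻`, the function
`H(p) := log n − 𝔻(p‖uₙ)` (binary logarithm) is an entropy. -/
theorem stmt8 (D : (n : ℕ) → (Fin n → ℝ) → (Fin n → ℝ) → ℝ≥0∞)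
    (hD : IsRelativeEntropy D) :
    IsEntropy (fun n p => Real.logb 2 n - (D n p (uniform n)).toReal) := by
  have logb_nn : ∀ n : ℕ, 0 < n → 0 ≤ Real.logb 2 n := fun n hn =>
    Real.logb_nonneg (by norm_num) (by exact_mod_cast hn)
  constructor
  · -- nonneg
    intro n p hp
    have hn := dim_pos hp
    rw [sub_nonneg]
    have h1 : D n p (uniform n) ≤ ENNReal.ofReal (Real.logb 2 n) := by
      rw [← f_eq hD hn]
      exact D_le_pure hD hp
    have h2 := ENNReal.toReal_mono ENNReal.ofReal_ne_top h1
    rwa [ENNReal.toReal_ofReal (logb_nn n hn)] at h2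
  · -- mono
    intro n m p p' hp hp' hmaj
    have hn := dim_pos hp
    have hm := dim_pos hp'
    have hnm : 0 < n * m := Nat.mul_pos hn hm
    have hmn : 0 < m * n := Nat.mul_pos hm hn
    have ha : IsProbVec (kron p (e1 m)) := isProbVec_kron hp (isProbVec_e1 hm)
    have hb' : IsProbVec (kron p' (e1 n)) := isProbVec_kron hp' (isProbVec_e1 hn)
    set b : Fin (n * m) → ℝ := fun i => kron p' (e1 n) (finCongr (Nat.mul_comm n m) i)
      with hbdef
    have hb : IsProbVec b := by
      constructor
      · intro i; exact hb'.1 _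
      · simp only [hbdef]
        rw [Equiv.sum_comp (finCongr (Nat.mul_comm n m)) (kron p' (e1 n))]
        exact hb'.2
    have hmpsa : ∀ k, maxPartialSum (kron p (e1 m)) k = maxPartialSum p k :=
      mps_kron_e1 p hm
    have hmpsb : ∀ k, maxPartialSum b k = maxPartialSum p' k := by
      intro k
      simp only [hbdef]
      rw [← mps_reindex (Nat.mul_comm n m) (kron p' (e1 n)) k]
      exact mps_kron_e1 p' hn k
    have hM : ∀ k, maxPartialSum b k ≤ maxPartialSum (kron p (e1 m)) k := by
      intro k
      rw [hmpsa, hmpsb]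
      exact hmaj k
    obtain ⟨W0, hW0s, hW0a, hW0u⟩ := hlp ha hb hM
    set W : Matrix (Fin (n * m)) (Fin (m * n)) ℝ :=
      fun i j => W0 i (finCongr (Nat.mul_comm m n) j) with hWdef
    have hWs : IsStochastic W := by
      constructor
      · intro i j; exact hW0s.1 _ _
      · intro i
        simp only [hWdef]
        rw [Equiv.sum_comp (finCongr (Nat.mul_comm m n)) (W0 i)]
        exact hW0s.2 i
    have hcc : ∀ j : Fin (m * n),
        finCongr (Nat.mul_comm n m) (finCongr (Nat.mul_comm m n) j) = j := by
      intro j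
      apply Fin.ext
      simp
    have hWa : Matrix.vecMul (kron p (e1 m)) W = kron p' (e1 n) := by
      funext j
      have h1 : Matrix.vecMul (kron p (e1 m)) W j
          = Matrix.vecMul (kron p (e1 m)) W0 (finCongr (Nat.mul_comm m n) j) := rfl
      rw [h1, hW0a]
      simp only [hbdef]
      rw [hcc j]
    have hWu : Matrix.vecMul (uniform (n * m)) W = uniform (m * n) := by
      funext j
      have h1 : Matrix.vecMul (uniform (n * m)) W j
          = Matrix.vecMul (uniform (n * m)) W0 (finCongr (Nat.mul_comm m n) j) := rfl
      rw [h1, hW0u]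
      show ((n * m : ℕ) : ℝ)⁻¹ = ((m * n : ℕ) : ℝ)⁻¹
      rw [Nat.mul_comm]
    have hle := hD.dpi (kron p (e1 m)) (uniform (n * m)) (kron p' (e1 n)) (uniform (m * n))
      ha (isProbVec_uniform hnm) hb' (isProbVec_uniform hmn) ⟨W, hWs, hWa, hWu⟩
    have hA : D (n * m) (kron p (e1 m)) (uniform (n * m))
        = D n p (uniform n) + D m (e1 m) (uniform m) := by
      rw [← kron_uniform n m]
      exact hD.additive _ _ _ _ hp (isProbVec_uniform hn) (isProbVec_e1 hm)
        (isProbVec_uniform hm)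
    have hB : D (m * n) (kron p' (e1 n)) (uniform (m * n))
        = D m p' (uniform m) + D n (e1 n) (uniform n) := by
      rw [← kron_uniform m n]
      exact hD.additive _ _ _ _ hp' (isProbVec_uniform hm) (isProbVec_e1 hn)
        (isProbVec_uniform hn)
    rw [hA, hB, f_eq hD hn, f_eq hD hm] at hle
    have hpt : D n p (uniform n) ≠ ⊤ := D_ne_top hD hp
    have hpt' : D m p' (uniform m) ≠ ⊤ := D_ne_top hD hp'
    have htt := ENNReal.toReal_mono
      (ENNReal.add_ne_top.2 ⟨hpt, ENNReal.ofReal_ne_top⟩) hle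
    rw [ENNReal.toReal_add hpt' ENNReal.ofReal_ne_top,
      ENNReal.toReal_add hpt ENNReal.ofReal_ne_top,
      ENNReal.toReal_ofReal (logb_nn n hn), ENNReal.toReal_ofReal (logb_nn m hm)] at htt
    linarith
  · -- additive
    intro n m p q hp hq
    have hn := dim_pos hp
    have hm := dim_pos hq
    rw [← kron_uniform n m,
      hD.additive p (uniform n) q (uniform m) hp (isProbVec_uniform hn) hq
        (isProbVec_uniform hm),
      ENNReal.toReal_add (D_ne_top hD hp) (D_ne_top hD hq)]
    have hcast : Real.logb 2 ((n * m : ℕ) : ℝ) = Real.logb 2 n + Real.logb 2 m := by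
      push_cast
      exact Real.logb_mul (by exact_mod_cast hn.ne') (by exact_mod_cast hm.ne')
    rw [hcast]
    ring
  · -- normalized
    rw [D_unif hD (by norm_num : (0:ℕ) < 2)]
    norm_num
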